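/- Let p ≥ 1. Suppose there exist δ ∈ ℝ and C > 0 such that for every λ ≥ 1 and the specific cut-off ψ with ψ = 1 on the ball of radius 1/2 and ψ = 0 outside the unit ball, the estimate ‖∫_ℝ e^{iλ(xt²+y²t)} ψ(x,y,t) f(t) dt‖_{L^p(dx dy)} ≤ C λ^{-δ} ‖f‖_{L²(ℝ)} holds for all f ∈ L²(ℝ). Then δ ≤ 3/(2p). In particular, for p = 6, δ ≤ 1/4, so the L²→L⁶ decay rate 1/4 is sharp. -/

import Mathlib

open MeasureTheory Real ENNReal

set_option maxHeartbeats 1000000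

/-- Sharpness of the `L² → L^p` decay: if for a cut-off `ψ` which is `1` on the ball of
radius `1/2` and `0` outside the unit ball, the estimate
`‖𝒪_λ f‖_{L²(ℝ²)} ≤ C λ^{-δ} ‖f‖_{L²}` holds for all `λ ≥ 1` and `f ∈ L²`,
then `δ ≤ 3/(2p)`. In particular for `p = 6` this gives `δ ≤ 1/4`. -/
theorem stmt14 (p : ℝ) (hp : 1 ≤ p) (δ C : ℝ) (hC : 0 < C) (ψ : ℝ → ℝ → ℝ → ℂ)
    (hψcont : Continuous (fun p : ℝ × ℝ × ℝ => ψ p.1 p.2.1 p.2.2))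
    (hψ1 : ∀ x y t : ℝ, x ^ 2 + y ^ 2 + t ^ 2 ≤ (1 / 2 : ℝ) ^ 2 → ψ x y t = 1)
    (hψ0 : ∀ x y t : ℝ, 1 ≤ x ^ 2 + y ^ 2 + t ^ 2 → ψ x y t = 0)
    (hest : ∀ L : ℝ, 1 ≤ L → ∀ f : ℝ → ℂ, MemLp f 2 volume →
      eLpNorm (fun z : ℝ × ℝ => ∫ t : ℝ,
          Complex.exp (Complex.I * (L : ℂ) * (((z.1 * t ^ 2 + z.2 ^ 2 * t : ℝ)) : ℂ)) *
            ψ z.1 z.2 t * f t) (ENNReal.ofReal p) volume ≤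
        ENNReal.ofReal (C * L ^ (-δ)) * eLpNorm f 2 volume) :
    δ ≤ 3 / (2 * p) := by
  by_contra hcon
  push_neg at hcon
  have hp0 : (0:ℝ) < p := lt_of_lt_of_le one_pos hp
  set s : ℝ := δ - 3 / (2 * p) with hsdef
  have hs0 : 0 < s := by rw [hsdef]; linarith
  set L : ℝ := max 16 ((8 * C + 1) ^ (1 / s)) with hLdef
  have hL16 : (16:ℝ) ≤ L := le_max_left _ _
  have hL1 : (1:ℝ) ≤ L := by linarith
  have hLpos : (0:ℝ) < L := by linarith
  have hLinv16 : L⁻¹ ≤ 1/16 := by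
    rw [show (1/16 : ℝ) = 16⁻¹ by norm_num]
    exact inv_anti₀ (by norm_num) hL16
  have hLinv0 : (0:ℝ) < L⁻¹ := inv_pos.mpr hLpos
  set f : ℝ → ℂ := (Set.Icc (0:ℝ) (1/4)).indicator (fun _ => 1) with hfdef
  have hfmem : MemLp f 2 volume :=
    memLp_indicator_const 2 measurableSet_Icc 1 (Or.inr (by simp [Real.volume_Icc]))
  have key := hest L hL1 f hfmem
  set a : ℝ := L⁻¹ with hadef
  set b : ℝ := L ^ (-(1/2) : ℝ) with hbdef
  have hapos : 0 < a := hLinv0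
  have hbpos : 0 < b := Real.rpow_pos_of_pos hLpos _
  have hb2 : b ^ 2 = L⁻¹ := by
    rw [hbdef, ← Real.rpow_natCast (L ^ (-(1/2):ℝ)) 2, ← Real.rpow_mul hLpos.le]
    norm_num [Real.rpow_neg_one]
  -- pointwise lower bound on the box
  have hpt : ∀ z : ℝ × ℝ, z ∈ Set.Icc (0:ℝ) a ×ˢ Set.Icc (0:ℝ) b →
      (1/8 : ℝ) ≤ ‖∫ t : ℝ,
          Complex.exp (Complex.I * (L : ℂ) * (((z.1 * t ^ 2 + z.2 ^ 2 * t : ℝ)) : ℂ)) *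
            ψ z.1 z.2 t * f t‖ := by
    rintro ⟨x, y⟩ ⟨⟨hx0, hxa⟩, ⟨hy0, hyb⟩⟩
    simp only at hx0 hxa hy0 hyb ⊢
    have hy2 : y ^ 2 ≤ L⁻¹ := by
      calc y ^ 2 ≤ b ^ 2 := by gcongr
        _ = L⁻¹ := hb2
    have hxa' : x ≤ 1/16 := le_trans hxa hLinv16
    have hint_eq : (fun t : ℝ => Complex.exp (Complex.I * (L : ℂ) *
          (((x * t ^ 2 + y ^ 2 * t : ℝ)) : ℂ)) * ψ x y t * f t)
        = (Set.Icc (0:ℝ) (1/4)).indicator (fun t : ℝ => Complex.exp (Complex.I * (L : ℂ) *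
          (((x * t ^ 2 + y ^ 2 * t : ℝ)) : ℂ))) := by
      funext t
      by_cases ht : t ∈ Set.Icc (0:ℝ) (1/4)
      · rw [Set.indicator_of_mem ht, hfdef, Set.indicator_of_mem ht]
        obtain ⟨ht0, ht4⟩ := ht
        have hψ : ψ x y t = 1 := hψ1 x y t (by nlinarith [hy2, hLinv16])
        rw [hψ]; ring
      · rw [Set.indicator_of_notMem ht, hfdef, Set.indicator_of_notMem ht]; ring
    rw [hint_eq, integral_indicator measurableSet_Icc]
    have hcont : Continuous (fun t : ℝ => Complex.exp (Complex.I * (L : ℂ) *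
        (((x * t ^ 2 + y ^ 2 * t : ℝ)) : ℂ))) := by
      exact Complex.continuous_exp.comp (by fun_prop)
    have hInt : IntegrableOn (fun t : ℝ => Complex.exp (Complex.I * (L : ℂ) *
        (((x * t ^ 2 + y ^ 2 * t : ℝ)) : ℂ))) (Set.Icc (0:ℝ) (1/4)) volume :=
      hcont.integrableOn_Icc
    have hre : (1/8 : ℝ) ≤ (∫ t in Set.Icc (0:ℝ) (1/4), Complex.exp (Complex.I * (L : ℂ) *
        (((x * t ^ 2 + y ^ 2 * t : ℝ)) : ℂ))).re := by
      have hir := integral_re hInt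
      simp only [RCLike.re_to_complex] at hir
      rw [← hir]
      have hcos : ∀ t ∈ Set.Icc (0:ℝ) (1/4),
          (1/2 : ℝ) ≤ (Complex.exp (Complex.I * (L : ℂ) *
            (((x * t ^ 2 + y ^ 2 * t : ℝ)) : ℂ))).re := by
        rintro t ⟨ht0, ht4⟩
        have hrw : Complex.I * (L : ℂ) * (((x * t ^ 2 + y ^ 2 * t : ℝ)) : ℂ)
            = ((L * (x * t ^ 2 + y ^ 2 * t) : ℝ) : ℂ) * Complex.I := by
          push_cast; ring
        rw [hrw, Complex.exp_ofReal_mul_I_re]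
        set θ : ℝ := L * (x * t ^ 2 + y ^ 2 * t) with hθdef
        have hθ0 : 0 ≤ θ := by
          apply mul_nonneg hLpos.le
          have h1 : 0 ≤ x * t ^ 2 := mul_nonneg hx0 (sq_nonneg t)
          have h2 : 0 ≤ y ^ 2 * t := mul_nonneg (sq_nonneg y) ht0
          linarith
        have hθ1 : θ ≤ 1 := by
          have hLL : L * L⁻¹ = 1 := mul_inv_cancel₀ hLpos.ne'
          have hxL : x ≤ L⁻¹ := hxa
          have ht2 : t ^ 2 ≤ 1/16 := by nlinarith
          have h1 : x * t ^ 2 ≤ L⁻¹ * (1/16) :=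
            mul_le_mul hxL ht2 (sq_nonneg t) hLinv0.le
          have h2 : y ^ 2 * t ≤ L⁻¹ * (1/4) :=
            mul_le_mul hy2 ht4 ht0 hLinv0.le
          calc θ = L * (x * t ^ 2 + y ^ 2 * t) := hθdef
            _ ≤ L * (L⁻¹ * (1/16) + L⁻¹ * (1/4)) :=
              mul_le_mul_of_nonneg_left (add_le_add h1 h2) hLpos.le
            _ = (L * L⁻¹) * (5/16) := by ring
            _ = 5/16 := by rw [hLL]; ring
            _ ≤ 1 := by norm_num
        have := Real.one_sub_sq_div_two_le_cos (x := θ)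
        nlinarith
      have hvol : volume (Set.Icc (0:ℝ) (1/4)) ≠ ⊤ := by simp [Real.volume_Icc]
      have := setIntegral_ge_of_const_le measurableSet_Icc hvol hcos
        ((Complex.continuous_re.comp hcont).integrableOn_Icc)
      calc (1/8 : ℝ) = 1/2 * (volume (Set.Icc (0:ℝ) (1/4))).toReal := by
            simp [Real.volume_Icc]; norm_num
        _ = volume.real (Set.Icc (0:ℝ) (1/4)) • (1/2 : ℝ) := by
            rw [smul_eq_mul, measureReal_def, mul_comm]
        _ ≤ _ := this
    calc (1/8 : ℝ) ≤ _ := hre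
      _ ≤ ‖(∫ t in Set.Icc (0:ℝ) (1/4), Complex.exp (Complex.I * (L : ℂ) *
          (((x * t ^ 2 + y ^ 2 * t : ℝ)) : ℂ)))‖ := by
        exact Complex.re_le_norm _
  -- measure of the box
  set B : Set (ℝ × ℝ) := Set.Icc (0:ℝ) a ×ˢ Set.Icc (0:ℝ) b with hBdef
  have hBmeas : MeasurableSet B := measurableSet_Icc.prod measurableSet_Icc
  have hBvol : volume B = ENNReal.ofReal a * ENNReal.ofReal b := by
    rw [hBdef, Measure.volume_eq_prod, Measure.prod_prod, Real.volume_Icc, Real.volume_Icc,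
      sub_zero, sub_zero]
  have hμB : volume.restrict B ≠ 0 := by
    rw [Ne, Measure.restrict_eq_zero, hBvol]
    simp only [mul_eq_zero, ENNReal.ofReal_eq_zero, not_or, not_le]
    exact ⟨hapos, hbpos⟩
  -- lower bound for the eLpNorm
  have hpne0 : (ENNReal.ofReal p) ≠ 0 := by
    simp only [Ne, ENNReal.ofReal_eq_zero, not_le]; linarith
  have hlow : (ENNReal.ofReal (1/8)) * (ENNReal.ofReal a * ENNReal.ofReal b) ^ (1/p) ≤
      eLpNorm (fun z : ℝ × ℝ => ∫ t : ℝ,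
          Complex.exp (Complex.I * (L : ℂ) * (((z.1 * t ^ 2 + z.2 ^ 2 * t : ℝ)) : ℂ)) *
            ψ z.1 z.2 t * f t) (ENNReal.ofReal p) volume := by
    have h1 : eLpNorm (fun _ : ℝ × ℝ => (1/8 : ℝ)) (ENNReal.ofReal p) (volume.restrict B) ≤
        eLpNorm (fun z : ℝ × ℝ => ∫ t : ℝ,
          Complex.exp (Complex.I * (L : ℂ) * (((z.1 * t ^ 2 + z.2 ^ 2 * t : ℝ)) : ℂ)) *
            ψ z.1 z.2 t * f t) (ENNReal.ofReal p) (volume.restrict B) := by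
      apply eLpNorm_mono_ae
      refine ae_restrict_of_forall_mem hBmeas (fun z hz => ?_)
      have := hpt z hz
      rw [Real.norm_eq_abs]
      rw [abs_of_nonneg (by norm_num : (0:ℝ) ≤ 1/8)]
      exact this
    rw [eLpNorm_const _ hpne0 hμB] at h1
    have h2 := le_trans h1 (eLpNorm_mono_measure _ Measure.restrict_le_self)
    have h3 : (‖(1/8 : ℝ)‖ₑ) = ENNReal.ofReal (1/8) := by
      rw [← ofReal_norm_eq_enorm, Real.norm_eq_abs,
        abs_of_nonneg (by norm_num : (0:ℝ) ≤ 1/8)]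
    rwa [Measure.restrict_apply_univ, hBvol, ENNReal.toReal_ofReal hp0.le, h3] at h2
  -- upper bound for ‖f‖₂
  have hub : eLpNorm f 2 volume ≤ 1 := by
    rw [hfdef, eLpNorm_indicator_const measurableSet_Icc (by norm_num) (by norm_num)]
    simp only [enorm_one, nnnorm_one, ENNReal.coe_one, one_mul, Real.volume_Icc, sub_zero]
    apply ENNReal.rpow_le_one
    · exact ENNReal.ofReal_le_one.mpr (by norm_num)
    · norm_num
  -- combine
  have main : ENNReal.ofReal (1/8 * (a * b) ^ (1/p)) ≤ ENNReal.ofReal (C * L ^ (-δ)) := by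
    have e1 : ENNReal.ofReal (1/8 * (a * b) ^ (1/p))
        = (ENNReal.ofReal (1/8)) * (ENNReal.ofReal a * ENNReal.ofReal b) ^ (1/p) := by
      rw [ENNReal.ofReal_mul (by norm_num), ← ENNReal.ofReal_rpow_of_pos (by positivity),
        ENNReal.ofReal_mul hapos.le]
    calc ENNReal.ofReal (1/8 * (a * b) ^ (1/p))
        = (ENNReal.ofReal (1/8)) * (ENNReal.ofReal a * ENNReal.ofReal b) ^ (1/p) := e1
      _ ≤ _ := hlow
      _ ≤ ENNReal.ofReal (C * L ^ (-δ)) * eLpNorm f 2 volume := key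
      _ ≤ ENNReal.ofReal (C * L ^ (-δ)) * 1 := by gcongr
      _ = ENNReal.ofReal (C * L ^ (-δ)) := mul_one _
  have hreal : 1/8 * (a * b) ^ (1/p) ≤ C * L ^ (-δ) :=
    (ENNReal.ofReal_le_ofReal_iff (by positivity)).mp main
  have hab : (a * b) ^ (1/p) = L ^ (-(3/(2*p))) := by
    have hab' : a * b = L ^ (-(3/2) : ℝ) := by
      rw [hadef, hbdef, ← Real.rpow_neg_one L, ← Real.rpow_add hLpos]
      norm_num
    rw [hab', ← Real.rpow_mul hLpos.le]
    congr 1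
    field_simp
  have hLδ : (0:ℝ) < L ^ δ := Real.rpow_pos_of_pos hLpos δ
  have e1 : L ^ δ * L ^ (-(3/(2*p))) = L ^ s := by
    rw [← Real.rpow_add hLpos, ← sub_eq_add_neg, ← hsdef]
  have e2 : L ^ δ * L ^ (-δ) = 1 := by
    rw [← Real.rpow_add hLpos]; simp
  have h1 : 1/8 * L ^ (-(3/(2*p))) ≤ C * L ^ (-δ) := by rwa [hab] at hreal
  have h3 := mul_le_mul_of_nonneg_left h1 hLδ.le
  have hfin : L ^ s ≤ 8 * C := by
    calc L ^ s = 8 * (L ^ δ * (1/8 * L ^ (-(3/(2*p))))) := by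
          rw [show L ^ δ * (1/8 * L ^ (-(3/(2*p)))) = 1/8 * (L ^ δ * L ^ (-(3/(2*p)))) from by
            ring, e1]; ring
      _ ≤ 8 * (L ^ δ * (C * L ^ (-δ))) := by linarith
      _ = 8 * C := by
          rw [show L ^ δ * (C * L ^ (-δ)) = C * (L ^ δ * L ^ (-δ)) from by ring, e2]; ring
  have hge : 8 * C + 1 ≤ L ^ s := by
    have h4 : (8 * C + 1) ^ (1/s) ≤ L := le_max_right _ _
    have h5 := Real.rpow_le_rpow (Real.rpow_nonneg (by linarith) _) h4 hs0.le
    rwa [← Real.rpow_mul (by linarith : (0:ℝ) ≤ 8 * C + 1), one_div_mul_cancel hs0.ne',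
      Real.rpow_one] at h5
  linarith
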